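/- Let 1 ≤ γ ≤ β be positive integers with β even, and let p, n be positive integers with gcd(p,n) = 1 and with p odd or γ odd. Then ∏_{k=1}^{βn-1} ( 2 − e^{2πi p k/(βn)} − e^{2πi (γ n + p) k/(βn)} ) = n·2^{βn−1+δ_{γ even}} ∏_{k=1}^{β/2−1} ( 1 − 2 cos(2π(p + γn/2)k/β) cos^n(πγk/β) + cos^{2n}(πγk/β) ), where δ_{γ even} equals 1 if γ is even and 0 otherwise. -/

import Mathlib

open Finset Real




open Polynomial in
lemma aux_prod_one_sub {n : ℕ} {μ : ℂ} (hn : 0 < n) (hμ : IsPrimitiveRoot μ n) (x : ℂ) :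
    ∏ t ∈ Finset.range n, (1 - x * μ ^ t) = 1 - x ^ n := by
  have h := X_pow_sub_C_eq_prod hμ (α := x) hn rfl
  apply_fun Polynomial.eval 1 at h
  simp only [eval_sub, eval_pow, eval_X, eval_C, eval_prod, eval_mul, one_pow] at h
  rw [← h.symm]
  exact Finset.prod_congr rfl (fun t _ => by ring)

lemma aux_prod_Icc (m : ℕ) (f : ℕ → ℂ) :
    ∏ k ∈ Finset.Icc 1 m, f k = ∏ k ∈ Finset.range m, f (k + 1) := by
  rw [← Finset.Ico_add_one_right_eq_Icc, Finset.prod_Ico_eq_prod_range]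
  simp [add_comm]

lemma aux_prod_root (n : ℕ) (hn : 1 ≤ n) {μ : ℂ} (hμ : IsPrimitiveRoot μ n) :
    ∏ t ∈ Finset.Icc 1 (n - 1), (1 - μ ^ t) = (n : ℂ) := by
  rw [aux_prod_Icc]
  obtain ⟨m, rfl⟩ : ∃ m, n = m + 1 := ⟨n - 1, by omega⟩
  simpa using IsPrimitiveRoot.prod_one_sub_pow_eq_order hμ

noncomputable def wf (β γ p n k : ℕ) : ℂ :=
  (Complex.exp (2 * Real.pi * Complex.I * p * k / (β * n))
    + Complex.exp (2 * Real.pi * Complex.I * (γ * n + p) * k / (β * n))) / 2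

noncomputable def epsf (p n : ℕ) : ℂ := Complex.exp (2 * Real.pi * Complex.I * p / n)

lemma epsf_prim (p n : ℕ) (hn : n ≠ 0) (hpn : Nat.gcd p n = 1) :
    IsPrimitiveRoot (epsf p n) n := by
  have h0 := Complex.isPrimitiveRoot_exp n hn
  have h1 := h0.pow_of_coprime p hpn
  have h2 : epsf p n = Complex.exp (2 * Real.pi * Complex.I / n) ^ p := by
    rw [epsf, ← Complex.exp_nat_mul]
    congr 1
    ring
  rw [h2]
  exact h1

lemma wf_key (β γ p n : ℕ) (hβ : β ≠ 0) (hn : n ≠ 0) (j t : ℕ) :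
    wf β γ p n (j + β * t) = wf β γ p n j * epsf p n ^ t := by
  have hβC : (β : ℂ) ≠ 0 := Nat.cast_ne_zero.mpr hβ
  have hnC : (n : ℂ) ≠ 0 := Nat.cast_ne_zero.mpr hn
  have h1 : Complex.exp (2 * Real.pi * Complex.I * p * (j + β * t : ℕ) / (β * n))
      = Complex.exp (2 * Real.pi * Complex.I * p * j / (β * n))
        * Complex.exp ((t : ℂ) * (2 * Real.pi * Complex.I * p / n)) := by
    rw [← Complex.exp_add]
    congr 1
    push_cast
    field_simp
  have h2 : Complex.exp (2 * Real.pi * Complex.I * (γ * n + p) * (j + β * t : ℕ) / (β * n))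
      = Complex.exp (2 * Real.pi * Complex.I * (γ * n + p) * j / (β * n))
        * (Complex.exp ((γ * t : ℕ) * (2 * Real.pi * Complex.I))
          * Complex.exp ((t : ℂ) * (2 * Real.pi * Complex.I * p / n))) := by
    rw [← Complex.exp_add, ← Complex.exp_add]
    congr 1
    push_cast
    field_simp
  rw [wf, wf, h1, h2, Complex.exp_nat_mul_two_pi_mul_I, one_mul, epsf, ← Complex.exp_nat_mul]
  ring

lemma wf_zero (β γ p n : ℕ) : wf β γ p n 0 = 1 := by
  simp [wf]

noncomputable def cf (β γ j : ℕ) : ℝ := Real.cos (Real.pi * γ * j / β)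

noncomputable def phif (β γ p n j : ℕ) : ℝ :=
  2 * Real.pi * ((p : ℝ) + γ * n / 2) * j / (β * n)

noncomputable def psif (β γ p n j : ℕ) : ℝ :=
  2 * Real.pi * ((p : ℝ) + γ * n / 2) * j / β

lemma wf_polar (β γ p n : ℕ) (hβ : β ≠ 0) (hn : n ≠ 0) (j : ℕ) :
    wf β γ p n j
      = (cf β γ j : ℂ) * Complex.exp ((phif β γ p n j : ℝ) * Complex.I) := by
  have hβC : (β : ℂ) ≠ 0 := Nat.cast_ne_zero.mpr hβ
  have hnC : (n : ℂ) ≠ 0 := Nat.cast_ne_zero.mpr hn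
  have h1 : Complex.exp (2 * Real.pi * Complex.I * p * j / (β * n))
      = Complex.exp ((phif β γ p n j : ℝ) * Complex.I)
        * Complex.exp (-((Real.pi : ℂ) * γ * j / β) * Complex.I) := by
    rw [← Complex.exp_add]
    congr 1
    rw [phif]
    push_cast
    field_simp
    ring
  have h2 : Complex.exp (2 * Real.pi * Complex.I * (γ * n + p) * j / (β * n))
      = Complex.exp ((phif β γ p n j : ℝ) * Complex.I)
        * Complex.exp (((Real.pi : ℂ) * γ * j / β) * Complex.I) := by
    rw [← Complex.exp_add]
    congr 1
    rw [phif]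
    push_cast
    field_simp
    ring
  have hc : ((cf β γ j : ℝ) : ℂ) = Complex.cos ((Real.pi : ℂ) * γ * j / β) := by
    rw [cf, Complex.ofReal_cos]
    push_cast
    ring_nf
  rw [wf, h1, h2, hc]
  linear_combination (-(Complex.exp ((phif β γ p n j : ℝ) * Complex.I)) / 2)
    * Complex.two_cos ((Real.pi : ℂ) * γ * j / β)

lemma wf_pow (β γ p n : ℕ) (hβ : β ≠ 0) (hn : n ≠ 0) (j : ℕ) :
    wf β γ p n j ^ n
      = (cf β γ j : ℂ) ^ n * Complex.exp ((psif β γ p n j : ℝ) * Complex.I) := by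
  have hβC : (β : ℂ) ≠ 0 := Nat.cast_ne_zero.mpr hβ
  have hnC : (n : ℂ) ≠ 0 := Nat.cast_ne_zero.mpr hn
  rw [wf_polar β γ p n hβ hn, mul_pow, ← Complex.exp_nat_mul]
  congr 2
  rw [phif, psif]
  push_cast
  field_simp

lemma cf_sub (β γ : ℕ) (hβ : β ≠ 0) {j : ℕ} (hj : j ≤ β) :
    cf β γ (β - j) = (-1 : ℝ) ^ γ * cf β γ j := by
  have hβR : (β : ℝ) ≠ 0 := Nat.cast_ne_zero.mpr hβ
  have harg : Real.pi * γ * ((β - j : ℕ) : ℝ) / β = (γ : ℕ) * Real.pi - Real.pi * γ * j / β := by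
    rw [Nat.cast_sub hj]
    field_simp
  rw [cf, cf, harg, Real.cos_nat_mul_pi_sub]

lemma psif_sub (β γ p n : ℕ) (hβ : β ≠ 0) (hn : n ≠ 0) {j : ℕ} (hj : j ≤ β) :
    Complex.exp ((psif β γ p n (β - j) : ℝ) * Complex.I)
      = (-1 : ℂ) ^ (γ * n) * Complex.exp (-(psif β γ p n j : ℝ) * Complex.I) := by
  have hβC : (β : ℂ) ≠ 0 := Nat.cast_ne_zero.mpr hβ
  have hψ : ((psif β γ p n (β - j) : ℝ) : ℂ) * Complex.I
      = (p : ℂ) * (2 * Real.pi * Complex.I) + ((γ * n : ℕ) : ℂ) * (Real.pi * Complex.I)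
        + (-(psif β γ p n j : ℝ) * Complex.I) := by
    rw [psif, psif, Nat.cast_sub hj]
    push_cast
    field_simp
    ring
  rw [hψ, Complex.exp_add, Complex.exp_add, Complex.exp_nat_mul, Complex.exp_nat_mul,
    Complex.exp_pi_mul_I]
  norm_num [Complex.exp_two_pi_mul_I]

lemma wf_pair (β γ p n : ℕ) (hβ : β ≠ 0) (hn : n ≠ 0) {j : ℕ} (hj : j ≤ β) :
    (1 - wf β γ p n j ^ n) * (1 - wf β γ p n (β - j) ^ n)
      = (((1 : ℝ) - 2 * Real.cos (psif β γ p n j) * cf β γ j ^ n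
          + cf β γ j ^ (2 * n) : ℝ) : ℂ) := by
  have hprod : Complex.exp ((psif β γ p n j : ℝ) * Complex.I)
      * Complex.exp (-(psif β γ p n j : ℝ) * Complex.I) = 1 := by
    rw [← Complex.exp_add]; simp
  have hsum : Complex.exp ((psif β γ p n j : ℝ) * Complex.I)
      + Complex.exp (-(psif β γ p n j : ℝ) * Complex.I)
      = 2 * Complex.cos ((psif β γ p n j : ℝ) : ℂ) := by
    exact (Complex.two_cos _).symm
  have hss : ((-1 : ℂ)) ^ (γ * n) * ((-1 : ℂ)) ^ (γ * n) = 1 := by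
    rw [← pow_add]
    exact Even.neg_one_pow ⟨γ * n, rfl⟩
  rw [wf_pow β γ p n hβ hn, wf_pow β γ p n hβ hn, cf_sub β γ hβ hj, psif_sub β γ p n hβ hn hj]
  push_cast
  set u := Complex.exp ((psif β γ p n j : ℝ) * Complex.I)
  set v := Complex.exp (-(psif β γ p n j : ℝ) * Complex.I)
  set c := ((cf β γ j : ℝ) : ℂ)
  linear_combination (-(c ^ n) * v + c ^ (2 * n) * u * v) * hss + c ^ (2 * n) * hprod
    + (-(c ^ n)) * hsum

lemma wf_mid_even (β γ p n a m : ℕ) (hn : n ≠ 0) (hm : β = 2 * m) (hm0 : m ≠ 0)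
    (hγ : γ = 2 * a) (hp : Odd p) :
    1 - wf β γ p n m ^ n = 2 := by
  have hβ : β ≠ 0 := by omega
  have hmR : (m : ℝ) ≠ 0 := Nat.cast_ne_zero.mpr hm0
  have hc : cf β γ m = (-1 : ℝ) ^ a := by
    have harg : Real.pi * γ * m / β = (a : ℕ) * Real.pi - 0 := by
      subst hm hγ
      push_cast
      field_simp
      ring
    rw [cf, harg, Real.cos_nat_mul_pi_sub]
    simp
  have hψ : ((psif β γ p n m : ℝ) : ℂ) * Complex.I
      = ((p + a * n : ℕ) : ℂ) * (Real.pi * Complex.I) := by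
    have hmC : (m : ℂ) ≠ 0 := Nat.cast_ne_zero.mpr hm0
    rw [psif]
    subst hm hγ
    push_cast
    field_simp
  obtain ⟨q, hq⟩ := hp
  have hodd : Odd (a * n + (p + a * n)) := ⟨a * n + q, by rw [hq]; ring⟩
  rw [wf_pow β γ p n hβ hn, hc, hψ, Complex.exp_nat_mul, Complex.exp_pi_mul_I]
  push_cast
  rw [← pow_mul, ← pow_add, Odd.neg_one_pow hodd]
  ring

lemma wf_mid_odd (β γ p n m : ℕ) (hn : n ≠ 0) (hm : β = 2 * m) (hm0 : m ≠ 0)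
    (hγ : Odd γ) :
    1 - wf β γ p n m ^ n = 1 := by
  have hβ : β ≠ 0 := by omega
  have hmR : (m : ℝ) ≠ 0 := Nat.cast_ne_zero.mpr hm0
  obtain ⟨k, hk⟩ := hγ
  have hc : cf β γ m = 0 := by
    apply Real.cos_eq_zero_iff.mpr
    refine ⟨(k : ℤ), ?_⟩
    rw [hk]
    subst hm
    push_cast
    field_simp
  rw [wf_pow β γ p n hβ hn, hc]
  simp [zero_pow hn]

/-- Number of spanning trees in the two-generated directed circulant graph
`C→^{p, γn+p}_{βn}` for even `β`, `gcd(p,n) = 1` and `p` or `γ` odd: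
`∏_{k=1}^{βn−1} (2 − e^{2πipk/(βn)} − e^{2πi(γn+p)k/(βn)})
  = n·2^{βn−1+δ_{γ even}} ∏_{k=1}^{β/2−1} (1 − 2cos(2π(p+γn/2)k/β)cosⁿ(πγk/β) + cos^{2n}(πγk/β))`. -/
theorem stmt_5 (β γ p n : ℕ) (hγ1 : 1 ≤ γ) (hγβ : γ ≤ β) (hβeven : Even β)
    (hp : 1 ≤ p) (hn : 1 ≤ n) (hpn : Nat.gcd p n = 1) (hodd : Odd p ∨ Odd γ) :
    ∏ k ∈ Finset.Icc 1 (β * n - 1),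
        ((2 : ℂ) - Complex.exp (2 * Real.pi * Complex.I * p * k / (β * n))
          - Complex.exp (2 * Real.pi * Complex.I * (γ * n + p) * k / (β * n)))
      = (n : ℂ) * 2 ^ (β * n - 1 + (if Even γ then 1 else 0)) *
        ∏ k ∈ Finset.Icc 1 (β / 2 - 1),
          (((1 : ℝ)
              - 2 * Real.cos (2 * Real.pi * ((p : ℝ) + γ * n / 2) * k / β)
                  * Real.cos (Real.pi * γ * k / β) ^ n
              + Real.cos (Real.pi * γ * k / β) ^ (2 * n) : ℝ) : ℂ) := by
  classical
  have hβ2 : 2 ≤ β := by obtain ⟨b, hb⟩ := hβeven; omega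
  have hm : β = 2 * (β / 2) := by obtain ⟨b, hb⟩ := hβeven; omega
  set m := β / 2 with hmdef
  have hm0 : m ≠ 0 := by omega
  have hβ0 : β ≠ 0 := by omega
  have hn0 : n ≠ 0 := by omega
  have hεprim : IsPrimitiveRoot (epsf p n) n := epsf_prim p n hn0 hpn
  have hmul : β * (n - 1) + β = β * n := by
    have hsucc : n - 1 + 1 = n := by omega
    calc β * (n - 1) + β = β * ((n - 1) + 1) := by rw [Nat.mul_succ]
      _ = β * n := by rw [hsucc]
  -- Step 1 : each factor is 2 * (1 - w k)
  have hstep1 : ∏ k ∈ Finset.Icc 1 (β * n - 1),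
        ((2 : ℂ) - Complex.exp (2 * Real.pi * Complex.I * p * k / (β * n))
          - Complex.exp (2 * Real.pi * Complex.I * (γ * n + p) * k / (β * n)))
      = 2 ^ (β * n - 1) * ∏ k ∈ Finset.Icc 1 (β * n - 1), (1 - wf β γ p n k) := by
    rw [Finset.prod_congr rfl (fun (k : ℕ) _ => show
        (2 : ℂ) - Complex.exp (2 * Real.pi * Complex.I * p * k / (β * n))
          - Complex.exp (2 * Real.pi * Complex.I * (γ * n + p) * k / (β * n))
        = 2 * (1 - wf β γ p n k) from by rw [wf]; ring),
      Finset.prod_mul_distrib, Finset.prod_const, Nat.card_Icc]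
    norm_num
  -- Step 2 : decompose the index set
  set S1 := (Finset.Icc 1 (n - 1)).image (fun t => β * t) with hS1def
  set S2 := ((Finset.Icc 1 (β - 1)) ×ˢ Finset.range n).image
      (fun q : ℕ × ℕ => q.1 + β * q.2) with hS2def
  have hdisj : Disjoint S1 S2 := by
    rw [Finset.disjoint_left]
    rintro x hx1 hx2
    simp only [hS1def, hS2def, Finset.mem_image, Finset.mem_Icc, Finset.mem_product,
      Finset.mem_range, Prod.exists] at hx1 hx2
    obtain ⟨t, ht, rfl⟩ := hx1
    obtain ⟨j, s, ⟨⟨hj1, hj2⟩, hs⟩, heq⟩ := hx2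
    have h1 : (j + β * s) % β = j % β := Nat.add_mul_mod_self_left j β s
    have h2 : j % β = j := Nat.mod_eq_of_lt (by omega)
    have h3 : (β * t) % β = 0 := Nat.mul_mod_right β t
    rw [← heq] at h3
    omega
  have hunion : Finset.Icc 1 (β * n - 1) = S1 ∪ S2 := by
    ext k
    simp only [hS1def, hS2def, Finset.mem_union, Finset.mem_image, Finset.mem_Icc,
      Finset.mem_product, Finset.mem_range, Prod.exists]
    constructor
    · rintro ⟨hk1, hk2⟩
      have hd : β * (k / β) + k % β = k := Nat.div_add_mod k β
      have hlt : k % β < β := Nat.mod_lt _ (by omega)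
      have hklt : k < β * n := by omega
      have hdiv : k / β < n := Nat.div_lt_of_lt_mul hklt
      by_cases h0 : k % β = 0
      · left
        refine ⟨k / β, ⟨?_, by omega⟩, by omega⟩
        rcases Nat.eq_zero_or_pos (k / β) with h | h
        · rw [h, Nat.mul_zero] at hd; omega
        · omega
      · right
        exact ⟨k % β, k / β, ⟨⟨by omega, by omega⟩, hdiv⟩, by omega⟩
    · rintro (⟨t, ⟨ht1, ht2⟩, rfl⟩ | ⟨j, t, ⟨⟨hj1, hj2⟩, ht⟩, rfl⟩)
      · have h1 : β * t ≤ β * (n - 1) := Nat.mul_le_mul_left β ht2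
        have h3 : 1 ≤ β * t := Nat.mul_pos (by omega) (by omega)
        omega
      · have h1 : β * t ≤ β * (n - 1) := Nat.mul_le_mul_left β (by omega)
        omega
  -- Step 3 : product over S1 equals n
  have hprodS1 : ∏ k ∈ S1, (1 - wf β γ p n k) = (n : ℂ) := by
    rw [hS1def, Finset.prod_image (fun x _ y _ h => Nat.eq_of_mul_eq_mul_left (by omega) h)]
    rw [Finset.prod_congr rfl (fun t _ => show 1 - wf β γ p n (β * t) = 1 - epsf p n ^ t from by
      conv_lhs => rw [show β * t = 0 + β * t from (Nat.zero_add _).symm]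
      rw [wf_key β γ p n hβ0 hn0 0 t, wf_zero, one_mul])]
    exact aux_prod_root n hn hεprim
  -- Step 4 : product over S2
  have hprodS2 : ∏ k ∈ S2, (1 - wf β γ p n k)
      = ∏ j ∈ Finset.Icc 1 (β - 1), (1 - wf β γ p n j ^ n) := by
    rw [hS2def, Finset.prod_image ?inj]
    case inj =>
      rintro ⟨j, t⟩ hjt ⟨j', t'⟩ hjt' h
      simp only [Finset.mem_coe, Finset.mem_product, Finset.mem_Icc, Finset.mem_range] at hjt hjt'
      have h' : j + β * t = j' + β * t' := h
      have e1 : (j + β * t) % β = j % β := Nat.add_mul_mod_self_left j β t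
      have e2 : (j' + β * t') % β = j' % β := Nat.add_mul_mod_self_left j' β t'
      have h2 : j % β = j := Nat.mod_eq_of_lt (by omega)
      have h2' : j' % β = j' := Nat.mod_eq_of_lt (by omega)
      have hjj : j = j' := by rw [← h2, ← h2', ← e1, ← e2, h']
      subst hjj
      have htt : t = t' := Nat.eq_of_mul_eq_mul_left (show 0 < β by omega) (by omega)
      rw [htt]
    rw [Finset.prod_product (f := fun q : ℕ × ℕ => 1 - wf β γ p n (q.1 + β * q.2))]
    refine Finset.prod_congr rfl (fun j _ => ?_)
    rw [Finset.prod_congr rfl (fun t _ => show 1 - wf β γ p n (j + β * t)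
        = 1 - wf β γ p n j * epsf p n ^ t from by rw [wf_key β γ p n hβ0 hn0 j t])]
    exact aux_prod_one_sub (by omega) hεprim (wf β γ p n j)
  -- Step 5 : fold the product over j by pairing j with β - j
  have hIco : Finset.Icc 1 (β - 1) = Finset.Ico 1 β := by
    rw [← Finset.Ico_add_one_right_eq_Icc]
    congr 1
    omega
  have hsplit : ∏ j ∈ Finset.Icc 1 (β - 1), (1 - wf β γ p n j ^ n)
      = ((∏ j ∈ Finset.Ico 1 m, (1 - wf β γ p n j ^ n)) * (1 - wf β γ p n m ^ n))
        * ∏ j ∈ Finset.Ico (m + 1) β, (1 - wf β γ p n j ^ n) := by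
    rw [hIco, ← Finset.prod_Ico_consecutive _ (show 1 ≤ m + 1 by omega) (show m + 1 ≤ β by omega),
      Finset.prod_Ico_succ_top (show 1 ≤ m by omega)]
  have hrefl : ∏ j ∈ Finset.Ico (m + 1) β, (1 - wf β γ p n j ^ n)
      = ∏ j ∈ Finset.Ico 1 m, (1 - wf β γ p n (β - j) ^ n) := by
    refine Finset.prod_nbij' (fun j => β - j) (fun j => β - j) ?_ ?_ ?_ ?_ ?_
    · intro a ha; simp only [Finset.mem_Ico] at *; omega
    · intro a ha; simp only [Finset.mem_Ico] at *; omega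
    · intro a ha; simp only [Finset.mem_Ico] at ha; show β - (β - a) = a; omega
    · intro a ha; simp only [Finset.mem_Ico] at ha; show β - (β - a) = a; omega
    · intro a ha
      simp only [Finset.mem_Ico] at ha
      rw [show β - (β - a) = a by omega]
  have hpairs : (∏ j ∈ Finset.Ico 1 m, (1 - wf β γ p n j ^ n))
      * ∏ j ∈ Finset.Ico 1 m, (1 - wf β γ p n (β - j) ^ n)
      = ∏ j ∈ Finset.Ico 1 m,
          (((1 : ℝ) - 2 * Real.cos (psif β γ p n j) * cf β γ j ^ n
            + cf β γ j ^ (2 * n) : ℝ) : ℂ) := by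
    rw [← Finset.prod_mul_distrib]
    refine Finset.prod_congr rfl (fun j hj => ?_)
    simp only [Finset.mem_Ico] at hj
    exact wf_pair β γ p n hβ0 hn0 (by omega)
  have hmid : 1 - wf β γ p n m ^ n = if Even γ then 2 else 1 := by
    rcases Nat.even_or_odd γ with hγe | hγo
    · rw [if_pos hγe]
      have hpodd : Odd p := hodd.resolve_right (by simpa [Nat.not_odd_iff_even] using hγe)
      obtain ⟨a, ha⟩ := hγe
      exact wf_mid_even β γ p n a m hn0 hm hm0 (by omega) hpodd
    · rw [if_neg (Nat.not_even_iff_odd.mpr hγo)]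
      exact wf_mid_odd β γ p n m hn0 hm hm0 hγo
  -- Assemble everything
  have hIcc2 : Finset.Icc 1 (m - 1) = Finset.Ico 1 m := by
    rw [← Finset.Ico_add_one_right_eq_Icc]
    congr 1
    omega
  simp only [psif, cf] at hpairs
  rw [hstep1, hunion, Finset.prod_union hdisj, hprodS1, hprodS2, hsplit, hrefl, hmid, hIcc2]
  rw [show (∏ j ∈ Finset.Ico 1 m, (1 - wf β γ p n j ^ n)) * (if Even γ then (2:ℂ) else 1)
      * ∏ j ∈ Finset.Ico 1 m, (1 - wf β γ p n (β - j) ^ n)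
      = (if Even γ then (2:ℂ) else 1) * ((∏ j ∈ Finset.Ico 1 m, (1 - wf β γ p n j ^ n))
        * ∏ j ∈ Finset.Ico 1 m, (1 - wf β γ p n (β - j) ^ n)) from by ring, hpairs]
  split_ifs with h
  · rw [pow_succ]
    ring
  · rw [add_zero]
    ring
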